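/- Let X and Y be vector spaces over ℝ and let g : X → Y satisfy: there exist a*, a₀*, a₁* ∈ X such that g(a₀*) - g(a*) and g(a₁*) - g(a*) are linearly independent in Y. Then g is an affine mapping if and only if g satisfies both: (i) for every line L ⊆ X, the image g '' L is either a point or a line in Y, and (ii) for every line L ⊆ X, if g '' L is a line in Y then the restriction of g to L is injective. -/

import Mathlib

def IsLine {X : Type*} [AddCommGroup X] [Module ℝ X] (L : Set X) : Prop :=
  ∃ o d : X, d ≠ 0 ∧ L = {x | ∃ r : ℝ, x = r • d + o}

def IsPoint {X : Type*} (S : Set X) : Prop := ∃ p : X, S = {p}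

section Aux

variable {V : Type*} [AddCommGroup V] [Module ℝ V]

lemma smul_eq_zero'' {v : V} (hv : v ≠ 0) {r : ℝ} (h : r • v = 0) : r = 0 := by
  by_contra hr
  apply hv
  have : r⁻¹ • (r • v) = 0 := by rw [h, smul_zero]
  rwa [smul_smul, inv_mul_cancel₀ hr, one_smul] at this

lemma smul_cancel' {v : V} (hv : v ≠ 0) {t s : ℝ} (h : t • v = s • v) : t = s := by
  have h1 : (t - s) • v = 0 := by rw [sub_smul, h, sub_self]
  have := smul_eq_zero'' hv h1
  linarith

def lineThrough (p q : V) : Set V := {x | ∃ t : ℝ, x = t • (q - p) + p}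

lemma mem_lineThrough_left (p q : V) : p ∈ lineThrough p q := ⟨0, by module⟩

lemma mem_lineThrough_right (p q : V) : q ∈ lineThrough p q := ⟨1, by module⟩

lemma isLine_lineThrough {p q : V} (h : p ≠ q) : IsLine (lineThrough p q) :=
  ⟨p, q - p, sub_ne_zero.mpr (Ne.symm h), rfl⟩

lemma eq_lineThrough {L : Set V} (hL : IsLine L) {p q : V} (hp : p ∈ L) (hq : q ∈ L)
    (hpq : p ≠ q) : L = lineThrough p q := by
  obtain ⟨o, d, hd, rfl⟩ := hL
  obtain ⟨r₁, hr₁⟩ := hp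
  obtain ⟨r₂, hr₂⟩ := hq
  have hr : r₂ ≠ r₁ := by
    intro h; apply hpq; rw [hr₁, hr₂, h]
  have hdiff : q - p = (r₂ - r₁) • d := by rw [hr₁, hr₂]; module
  ext x
  constructor
  · rintro ⟨r, rfl⟩
    refine ⟨(r - r₁) / (r₂ - r₁), ?_⟩
    rw [hdiff, smul_smul, div_mul_cancel₀ _ (sub_ne_zero.mpr hr), hr₁]
    module
  · rintro ⟨t, rfl⟩
    refine ⟨t * (r₂ - r₁) + r₁, ?_⟩
    rw [hdiff, smul_smul, hr₁]
    module

end Aux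

section Prim

variable {X Y : Type*} [AddCommGroup X] [Module ℝ X] [AddCommGroup Y] [Module ℝ Y]
  (g : X → Y)

variable (hP : ∀ L : Set X, IsLine L → IsPoint (g '' L) ∨ IsLine (g '' L))
  (hI : ∀ L : Set X, IsLine L → IsLine (g '' L) → Set.InjOn g L)

include hP in
lemma img_isLine {p q : X} (hpq : p ≠ q) (hg : g p ≠ g q) :
    IsLine (g '' lineThrough p q) ∧ g '' lineThrough p q = lineThrough (g p) (g q) := by
  have hL := isLine_lineThrough hpq
  have hpm : g p ∈ g '' lineThrough p q := ⟨p, mem_lineThrough_left p q, rfl⟩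
  have hqm : g q ∈ g '' lineThrough p q := ⟨q, mem_lineThrough_right p q, rfl⟩
  rcases hP _ hL with hpt | hM
  · exfalso
    obtain ⟨y, hy⟩ := hpt
    rw [hy] at hpm hqm
    exact hg (hpm.trans hqm.symm)
  · exact ⟨hM, eq_lineThrough hM hpm hqm hg⟩

include hP in
lemma mem_line {p q : X} (hpq : p ≠ q) (hg : g p ≠ g q) (t : ℝ) :
    ∃ s : ℝ, g (t • (q - p) + p) = s • (g q - g p) + g p := by
  have h2 := (img_isLine g hP hpq hg).2
  have hm : g (t • (q - p) + p) ∈ g '' lineThrough p q := ⟨_, ⟨t, rfl⟩, rfl⟩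
  rw [h2] at hm
  exact hm

include hP in
lemma surj_line {p q : X} (hpq : p ≠ q) (hg : g p ≠ g q) (s : ℝ) :
    ∃ t : ℝ, g (t • (q - p) + p) = s • (g q - g p) + g p := by
  have h2 := (img_isLine g hP hpq hg).2
  have hm : s • (g q - g p) + g p ∈ lineThrough (g p) (g q) := ⟨s, rfl⟩
  rw [← h2] at hm
  obtain ⟨x, hxL, hgx⟩ := hm
  obtain ⟨t, rfl⟩ := hxL
  exact ⟨t, hgx⟩

include hP hI in
lemma inj_line {p q : X} (hpq : p ≠ q) (hg : g p ≠ g q) {t t' : ℝ}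
    (h : g (t • (q - p) + p) = g (t' • (q - p) + p)) : t = t' := by
  have hM := (img_isLine g hP hpq hg).1
  have hinj := hI _ (isLine_lineThrough hpq) hM
  have heq : t • (q - p) + p = t' • (q - p) + p := hinj ⟨t, rfl⟩ ⟨t', rfl⟩ h
  have h2 : t • (q - p) = t' • (q - p) := by
    have := add_right_cancel heq; exact this
  exact smul_cancel' (sub_ne_zero.mpr (Ne.symm hpq)) h2

include hP hI in
lemma collapse {p q : X} (hpq : p ≠ q) (hg : g p = g q) (t : ℝ) :
    g (t • (q - p) + p) = g p := by
  have hL := isLine_lineThrough hpq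
  rcases hP _ hL with hpt | hM
  · obtain ⟨y, hy⟩ := hpt
    have h1 : g (t • (q - p) + p) ∈ g '' lineThrough p q := ⟨_, ⟨t, rfl⟩, rfl⟩
    have h2 : g p ∈ g '' lineThrough p q := ⟨p, mem_lineThrough_left p q, rfl⟩
    rw [hy] at h1 h2
    exact h1.trans h2.symm
  · exfalso
    exact hpq (hI _ hL hM (mem_lineThrough_left p q) (mem_lineThrough_right p q) hg)

end Prim

section Plane

variable {X Y : Type*} [AddCommGroup X] [Module ℝ X] [AddCommGroup Y] [Module ℝ Y]

set_option maxHeartbeats 2000000 in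
theorem plane_thm (g : X → Y)
    (hP : ∀ L : Set X, IsLine L → IsPoint (g '' L) ∨ IsLine (g '' L))
    (hI : ∀ L : Set X, IsLine L → IsLine (g '' L) → Set.InjOn g L)
    {a u w : X} {A U W : Y}
    (hga : g a = A) (hgb : g (u + a) = U + A) (hgc : g (w + a) = W + A)
    (hUW : ∀ r s : ℝ, r • U + s • W = 0 → r = 0 ∧ s = 0) :
    ∀ x y : ℝ, g (x • u + y • w + a) = x • U + y • W + A := by
  -- basic nondegeneracy
  have hU0 : U ≠ 0 := by
    intro h
    exact one_ne_zero (hUW 1 0 (by rw [h]; simp)).1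
  have hW0 : W ≠ 0 := by
    intro h
    exact one_ne_zero (hUW 0 1 (by rw [h]; simp)).2
  have hu0 : u ≠ 0 := by
    intro h
    apply hU0
    have h2 : U + A = A := by rw [← hgb, h, zero_add, hga]
    exact add_eq_right.mp h2
  have hw0 : w ≠ 0 := by
    intro h
    apply hW0
    have h2 : W + A = A := by rw [← hgc, h, zero_add, hga]
    exact add_eq_right.mp h2
  have hba : a ≠ u + a := fun h => hu0 (by have := h.symm; exact add_eq_right.mp this)
  have hca : a ≠ w + a := fun h => hw0 (by have := h.symm; exact add_eq_right.mp this)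
  have hgba : g a ≠ g (u + a) := by
    rw [hga, hgb]; intro h; exact hU0 (add_eq_right.mp h.symm)
  have hgca : g a ≠ g (w + a) := by
    rw [hga, hgc]; intro h; exact hW0 (add_eq_right.mp h.symm)
  -- coefficient matching
  have coeff : ∀ {α β α' β' : ℝ}, α • U + β • W + A = α' • U + β' • W + A →
      α = α' ∧ β = β' := by
    intro α β α' β' h
    have h1 : (α • U + β • W + A) - (α' • U + β' • W + A) = (α - α') • U + (β - β') • W := by
      module
    rw [h, sub_self] at h1
    have h2 := hUW _ _ h1.symm
    exact ⟨by linarith [h2.1], by linarith [h2.2]⟩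
  -- independence of u, w
  have huw : ∀ r s : ℝ, r • u + s • w = 0 → r = 0 ∧ s = 0 := by
    intro r s h
    rcases eq_or_ne s 0 with hs | hs
    · subst hs
      rw [zero_smul, add_zero] at h
      exact ⟨smul_eq_zero'' hu0 h, rfl⟩
    · exfalso
      have h3 : w = (s⁻¹ * (-r)) • u := by
        have h2 : s • w = (-r) • u := by
          rw [neg_smul, eq_neg_iff_add_eq_zero, add_comm]; exact h
        have h4 := congrArg (fun z => s⁻¹ • z) h2
        simpa [smul_smul, inv_mul_cancel₀ hs] using h4
      have h5 : w + a = (s⁻¹ * (-r)) • ((u + a) - a) + a := by rw [h3]; module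
      obtain ⟨σ, hσ⟩ := mem_line g hP hba hgba (s⁻¹ * (-r))
      rw [← h5, hga, hgb] at hσ
      have h6 : W + A = σ • U + (0:ℝ) • W + A := by
        rw [hgc] at hσ
        rw [hσ]; module
      have h7 : (0:ℝ) • U + (1:ℝ) • W + A = σ • U + (0:ℝ) • W + A := by
        rw [← h6]; module
      exact one_ne_zero (coeff h7).2
  have ptne : ∀ {x y x' y' : ℝ}, (x ≠ x' ∨ y ≠ y') →
      x • u + y • w + a ≠ x' • u + y' • w + a := by
    intro x y x' y' hne h
    have h1 : (x • u + y • w + a) - (x' • u + y' • w + a) = (x - x') • u + (y - y') • w := by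
      module
    rw [h, sub_self] at h1
    have h2 := huw _ _ h1.symm
    rcases hne with hne | hne
    · exact hne (by linarith [h2.1])
    · exact hne (by linarith [h2.2])
  -- the axis parameterizations
  have hφe : ∀ x : ℝ, ∃ s : ℝ, g (x • u + a) = s • U + A := by
    intro x
    obtain ⟨s, hs⟩ := mem_line g hP hba hgba x
    refine ⟨s, ?_⟩
    have hpt : x • ((u + a) - a) + a = x • u + a := by module
    rw [hpt, hga, hgb] at hs
    rw [hs]; module
  choose φ hφ using hφe
  have hψe : ∀ y : ℝ, ∃ s : ℝ, g (y • w + a) = s • W + A := by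
    intro y
    obtain ⟨s, hs⟩ := mem_line g hP hca hgca y
    refine ⟨s, ?_⟩
    have hpt : y • ((w + a) - a) + a = y • w + a := by module
    rw [hpt, hga, hgc] at hs
    rw [hs]; module
  choose ψ hψ using hψe
  have φ0 : φ 0 = 0 := by
    have h := hφ 0
    have hpt : (0:ℝ) • u + a = a := by module
    rw [hpt, hga] at h
    exact smul_eq_zero'' hU0 (add_eq_right.mp h.symm)
  have ψ0 : ψ 0 = 0 := by
    have h := hψ 0
    have hpt : (0:ℝ) • w + a = a := by module
    rw [hpt, hga] at h
    exact smul_eq_zero'' hW0 (add_eq_right.mp h.symm)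
  have φ1 : φ 1 = 1 := by
    have h := hφ 1
    have hpt : (1:ℝ) • u + a = u + a := by module
    rw [hpt, hgb] at h
    have h2 : U = φ 1 • U := add_right_cancel h
    exact smul_cancel' hU0 (by rw [one_smul, ← h2])
  have ψ1 : ψ 1 = 1 := by
    have h := hψ 1
    have hpt : (1:ℝ) • w + a = w + a := by module
    rw [hpt, hgc] at h
    have h2 : W = ψ 1 • W := add_right_cancel h
    exact smul_cancel' hW0 (by rw [one_smul, ← h2])
  have φinj : ∀ {x x' : ℝ}, φ x = φ x' → x = x' := by
    intro x x' h
    apply inj_line g hP hI hba hgba (t := x) (t' := x')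
    have hpt : ∀ z : ℝ, z • ((u + a) - a) + a = z • u + a := fun z => by module
    rw [hpt, hpt, hφ, hφ, h]
  have ψinj : ∀ {y y' : ℝ}, ψ y = ψ y' → y = y' := by
    intro y y' h
    apply inj_line g hP hI hca hgca (t := y) (t' := y')
    have hpt : ∀ z : ℝ, z • ((w + a) - a) + a = z • w + a := fun z => by module
    rw [hpt, hpt, hψ, hψ, h]
  have hFe : ∀ x y : ℝ, ∃ α β : ℝ, g (x • u + y • w + a) = α • U + β • W + A := by
    intro x y
    rcases eq_or_ne y 1 with hy | hy
    · rcases eq_or_ne x 1 with hx | hx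
      · subst hx; subst hy
        have hPQ : (2:ℝ) • u + a ≠ (2:ℝ) • w + a := by
          intro h
          have h1 : ((2:ℝ) • u + a) - ((2:ℝ) • w + a) = (2:ℝ) • u + (-2:ℝ) • w := by module
          rw [h, sub_self] at h1
          exact two_ne_zero (huw _ _ h1.symm).1
        have hgPQ : g ((2:ℝ) • u + a) ≠ g ((2:ℝ) • w + a) := by
          rw [hφ 2, hψ 2]
          intro h
          have h2 : φ 2 • U + (0:ℝ) • W + A = (0:ℝ) • U + ψ 2 • W + A := by
            rw [show φ 2 • U + (0:ℝ) • W + A = φ 2 • U + A by module, h]; module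
          have h3 : (2:ℝ) = 0 := φinj (by rw [(coeff h2).1, φ0])
          norm_num at h3
        obtain ⟨s, hs⟩ := mem_line g hP hPQ hgPQ (1/2 : ℝ)
        refine ⟨φ 2 - s * φ 2, s * ψ 2, ?_⟩
        have hpt : (1:ℝ) • u + (1:ℝ) • w + a
            = (1/2 : ℝ) • (((2:ℝ) • w + a) - ((2:ℝ) • u + a)) + ((2:ℝ) • u + a) := by module
        rw [hpt, hs, hφ 2, hψ 2]
        module
      · have hx1 : (1:ℝ) - x ≠ 0 := sub_ne_zero.mpr (Ne.symm hx)
        have hPQ : u + a ≠ (1 - x)⁻¹ • w + a := by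
          intro h
          have h1 : (u + a) - ((1 - x)⁻¹ • w + a) = (1:ℝ) • u + (-(1 - x)⁻¹) • w := by module
          rw [h, sub_self] at h1
          exact one_ne_zero (huw _ _ h1.symm).1
        have hgPQ : g (u + a) ≠ g ((1 - x)⁻¹ • w + a) := by
          rw [hgb, hψ ((1 - x)⁻¹)]
          intro h
          have h2 : (1:ℝ) • U + (0:ℝ) • W + A = (0:ℝ) • U + ψ ((1 - x)⁻¹) • W + A := by
            rw [show (1:ℝ) • U + (0:ℝ) • W + A = U + A by module, h]; module
          exact one_ne_zero (coeff h2).1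
        obtain ⟨s, hs⟩ := mem_line g hP hPQ hgPQ (1 - x)
        refine ⟨1 - s, s * ψ ((1 - x)⁻¹), ?_⟩
        have hpt : x • u + y • w + a
            = (1 - x) • (((1 - x)⁻¹ • w + a) - (u + a)) + (u + a) := by
          rw [hy]
          match_scalars <;> (try field_simp) <;> try ring
        rw [hpt, hs, hgb, hψ ((1 - x)⁻¹)]
        module
    · have hy1 : (1:ℝ) - y ≠ 0 := sub_ne_zero.mpr (Ne.symm hy)
      have hPQ : (x / (1 - y)) • u + a ≠ w + a := by
        intro h
        have h1 : ((x / (1 - y)) • u + a) - (w + a) = (x / (1 - y)) • u + (-1:ℝ) • w := by module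
        rw [h, sub_self] at h1
        have h2 := (huw _ _ h1.symm).2
        norm_num at h2
      have hgPQ : g ((x / (1 - y)) • u + a) ≠ g (w + a) := by
        rw [hφ (x / (1 - y)), hgc]
        intro h
        have h2 : φ (x / (1 - y)) • U + (0:ℝ) • W + A = (0:ℝ) • U + (1:ℝ) • W + A := by
          rw [show φ (x / (1 - y)) • U + (0:ℝ) • W + A = φ (x / (1 - y)) • U + A by module, h]
          module
        exact zero_ne_one (coeff h2).2
      obtain ⟨s, hs⟩ := mem_line g hP hPQ hgPQ y
      refine ⟨φ (x / (1 - y)) * (1 - s), s, ?_⟩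
      have hpt : x • u + y • w + a
          = y • ((w + a) - ((x / (1 - y)) • u + a)) + ((x / (1 - y)) • u + a) := by
        match_scalars <;> (try field_simp) <;> try ring
      rw [hpt, hs, hφ (x / (1 - y)), hgc]
      module
  choose F1 F2 hF using hFe
  have hFx0 : ∀ x : ℝ, F1 x 0 = φ x ∧ F2 x 0 = 0 := by
    intro x
    have h1 := hF x 0
    have hpt : x • u + (0:ℝ) • w + a = x • u + a := by module
    rw [hpt, hφ x] at h1
    have h2 : φ x • U + (0:ℝ) • W + A = F1 x 0 • U + F2 x 0 • W + A := by
      rw [← h1]; module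
    exact ⟨(coeff h2).1.symm, (coeff h2).2.symm⟩
  have hF0y : ∀ y : ℝ, F1 0 y = 0 ∧ F2 0 y = ψ y := by
    intro y
    have h1 := hF 0 y
    have hpt : (0:ℝ) • u + y • w + a = y • w + a := by module
    rw [hpt, hψ y] at h1
    have h2 : (0:ℝ) • U + ψ y • W + A = F1 0 y • U + F2 0 y • W + A := by
      rw [← h1]; module
    exact ⟨(coeff h2).1.symm, (coeff h2).2.symm⟩
  have E1 : ∀ x y : ℝ, y ≠ 1 → F1 x y = φ (x / (1 - y)) * (1 - F2 x y) := by
    intro x y hy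
    have hy1 : (1:ℝ) - y ≠ 0 := sub_ne_zero.mpr (Ne.symm hy)
    have hPQ : (x / (1 - y)) • u + a ≠ w + a := by
      intro h
      have h1 : ((x / (1 - y)) • u + a) - (w + a) = (x / (1 - y)) • u + (-1:ℝ) • w := by module
      rw [h, sub_self] at h1
      have h2 := (huw _ _ h1.symm).2
      norm_num at h2
    have hgPQ : g ((x / (1 - y)) • u + a) ≠ g (w + a) := by
      rw [hφ (x / (1 - y)), hgc]
      intro h
      have h2 : φ (x / (1 - y)) • U + (0:ℝ) • W + A = (0:ℝ) • U + (1:ℝ) • W + A := by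
        rw [show φ (x / (1 - y)) • U + (0:ℝ) • W + A = φ (x / (1 - y)) • U + A by module, h]
        module
      exact zero_ne_one (coeff h2).2
    obtain ⟨s, hs⟩ := mem_line g hP hPQ hgPQ y
    have hpt : x • u + y • w + a
        = y • ((w + a) - ((x / (1 - y)) • u + a)) + ((x / (1 - y)) • u + a) := by
      match_scalars <;> (try field_simp) <;> try ring
    have hval : g (x • u + y • w + a) = (φ (x / (1 - y)) * (1 - s)) • U + s • W + A := by
      rw [hpt, hs, hφ (x / (1 - y)), hgc]; module
    have h2 : F1 x y • U + F2 x y • W + A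
        = (φ (x / (1 - y)) * (1 - s)) • U + s • W + A := by rw [← hval, hF]
    have h3 := coeff h2
    rw [h3.1, h3.2]
  have E2 : ∀ x y : ℝ, x ≠ 1 → F2 x y = ψ (y / (1 - x)) * (1 - F1 x y) := by
    intro x y hx
    have hx1 : (1:ℝ) - x ≠ 0 := sub_ne_zero.mpr (Ne.symm hx)
    have hPQ : u + a ≠ (y / (1 - x)) • w + a := by
      intro h
      have h1 : (u + a) - ((y / (1 - x)) • w + a) = (1:ℝ) • u + (-(y / (1 - x))) • w := by
        module
      rw [h, sub_self] at h1
      exact one_ne_zero (huw _ _ h1.symm).1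
    have hgPQ : g (u + a) ≠ g ((y / (1 - x)) • w + a) := by
      rw [hgb, hψ (y / (1 - x))]
      intro h
      have h2 : (1:ℝ) • U + (0:ℝ) • W + A = (0:ℝ) • U + ψ (y / (1 - x)) • W + A := by
        rw [show (1:ℝ) • U + (0:ℝ) • W + A = U + A by module, h]; module
      exact one_ne_zero (coeff h2).1
    obtain ⟨s, hs⟩ := mem_line g hP hPQ hgPQ (1 - x)
    have hpt : x • u + y • w + a
        = (1 - x) • (((y / (1 - x)) • w + a) - (u + a)) + (u + a) := by
      match_scalars <;> (try field_simp) <;> try ring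
    have hval : g (x • u + y • w + a) = (1 - s) • U + (s * ψ (y / (1 - x))) • W + A := by
      rw [hpt, hs, hgb, hψ (y / (1 - x))]; module
    have h2 : F1 x y • U + F2 x y • W + A
        = (1 - s) • U + (s * ψ (y / (1 - x))) • W + A := by rw [← hval, hF]
    have h3 := coeff h2
    rw [h3.1, h3.2]
    ring
  have Z : ∀ x y : ℝ, F1 x y = 0 → F2 x y = 0 → x = 0 ∧ y = 0 := by
    intro x y h1 h2
    rcases eq_or_ne y 0 with hy | hy
    · subst hy
      refine ⟨?_, rfl⟩
      have h3 := (hFx0 x).1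
      rw [h1] at h3
      exact φinj (by rw [← h3, φ0])
    · rcases eq_or_ne x 0 with hx | hx
      · exfalso
        subst hx
        have h3 := (hF0y y).2
        rw [h2] at h3
        exact hy (ψinj (by rw [← h3, ψ0]))
      · exfalso
        have hpa : a ≠ x • u + y • w + a := by
          intro h
          have h3 : (x • u + y • w + a) - a = x • u + y • w := by module
          rw [← h, sub_self] at h3
          exact hx (huw _ _ h3.symm).1
        have hval : g a = g (x • u + y • w + a) := by
          rw [hga, hF x y, h1, h2]; module
        have hcol := collapse g hP hI hpa hval
        have hcF : ∀ t : ℝ, F1 (t * x) (t * y) = 0 ∧ F2 (t * x) (t * y) = 0 := by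
          intro t
          have h3 := hcol t
          have hpt : t • ((x • u + y • w + a) - a) + a = (t * x) • u + (t * y) • w + a := by
            module
          rw [hpt, hF, hga] at h3
          have h4 : F1 (t * x) (t * y) • U + F2 (t * x) (t * y) • W + A
              = (0:ℝ) • U + (0:ℝ) • W + A := by rw [h3]; module
          exact ⟨(coeff h4).1, (coeff h4).2⟩
        rcases eq_or_ne (y⁻¹ * x) 1 with hr | hr
        · have h5 := hcF (2 * y⁻¹)
          have hxx : 2 * y⁻¹ * x = 2 := by
            calc 2 * y⁻¹ * x = 2 * (y⁻¹ * x) := by ring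
            _ = 2 := by rw [hr]; ring
          have hyy : 2 * y⁻¹ * y = 2 := by field_simp
          rw [hxx, hyy] at h5
          have h6 := E2 2 2 (by norm_num)
          rw [h5.1, h5.2, sub_zero, mul_one] at h6
          have h8 : (2 / (1 - 2) : ℝ) = 0 := ψinj (by rw [← h6, ψ0])
          norm_num at h8
        · have h5 := hcF y⁻¹
          have hyy : y⁻¹ * y = 1 := inv_mul_cancel₀ hy
          rw [hyy] at h5
          have h6 := E2 (y⁻¹ * x) 1 hr
          rw [h5.1, h5.2, sub_zero, mul_one] at h6
          have h8 : (1 / (1 - y⁻¹ * x) : ℝ) = 0 := ψinj (by rw [← h6, ψ0])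
          rw [one_div, inv_eq_zero, sub_eq_zero] at h8
          exact hr h8.symm
  have injP : ∀ x y x' y' : ℝ, g (x • u + y • w + a) = g (x' • u + y' • w + a) →
      x = x' ∧ y = y' := by
    intro x y x' y' h
    by_cases hxx : x = x'
    · by_cases hyy : y = y'
      · exact ⟨hxx, hyy⟩
      · exfalso
        subst hxx
        have hpq : x • u + y • w + a ≠ x • u + y' • w + a := ptne (Or.inr hyy)
        have hcol := collapse g hP hI hpq h
        have hcF : ∀ t : ℝ, F1 x (y + t * (y' - y)) = F1 x y
            ∧ F2 x (y + t * (y' - y)) = F2 x y := by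
          intro t
          have h3 := hcol t
          have hpt : t • ((x • u + y' • w + a) - (x • u + y • w + a)) + (x • u + y • w + a)
              = x • u + (y + t * (y' - y)) • w + a := by module
          rw [hpt, hF, hF] at h3
          exact ⟨(coeff h3).1, (coeff h3).2⟩
        have hd : y' - y ≠ 0 := sub_ne_zero.mpr (Ne.symm hyy)
        have hcst : ∀ z : ℝ, F1 x z = F1 x y ∧ F2 x z = F2 x y := by
          intro z
          have h4 := hcF ((z - y) / (y' - y))
          rwa [show y + (z - y) / (y' - y) * (y' - y) = z from by field_simp; ring] at h4
        have h0 := hcst 0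
        have hα : F1 x y = φ x := by rw [← h0.1, (hFx0 x).1]
        have hβ : F2 x y = 0 := by rw [← h0.2, (hFx0 x).2]
        rcases eq_or_ne x 1 with hx1 | hx1
        · subst hx1
          have h6 := E1 1 2 (by norm_num)
          rw [(hcst 2).1, (hcst 2).2, hα, hβ, φ1, sub_zero, mul_one] at h6
          have h8 : (1 : ℝ) = (1 / (1 - 2) : ℝ) := φinj (by rw [← h6, φ1])
          norm_num at h8
        · have h6 := E2 x (1 - x) hx1
          rw [(hcst (1 - x)).1, (hcst (1 - x)).2, hα, hβ,
            show (1 - x) / (1 - x) = 1 from div_self (sub_ne_zero.mpr (Ne.symm hx1)),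
            ψ1, one_mul] at h6
          have h7 : φ x = 1 := by linarith
          exact hx1 (φinj (by rw [h7, φ1]))
    · by_cases hyy : y = y'
      · exfalso
        subst hyy
        have hpq : x • u + y • w + a ≠ x' • u + y • w + a := ptne (Or.inl hxx)
        have hcol := collapse g hP hI hpq h
        have hcF : ∀ t : ℝ, F1 (x + t * (x' - x)) y = F1 x y
            ∧ F2 (x + t * (x' - x)) y = F2 x y := by
          intro t
          have h3 := hcol t
          have hpt : t • ((x' • u + y • w + a) - (x • u + y • w + a)) + (x • u + y • w + a)
              = (x + t * (x' - x)) • u + y • w + a := by module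
          rw [hpt, hF, hF] at h3
          exact ⟨(coeff h3).1, (coeff h3).2⟩
        have hd : x' - x ≠ 0 := sub_ne_zero.mpr (Ne.symm hxx)
        have hcst : ∀ z : ℝ, F1 z y = F1 x y ∧ F2 z y = F2 x y := by
          intro z
          have h4 := hcF ((z - x) / (x' - x))
          rwa [show x + (z - x) / (x' - x) * (x' - x) = z from by field_simp; ring] at h4
        have h0 := hcst 0
        have hα : F1 x y = 0 := by rw [← h0.1, (hF0y y).1]
        have hβ : F2 x y = ψ y := by rw [← h0.2, (hF0y y).2]
        rcases eq_or_ne y 1 with hy1 | hy1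
        · subst hy1
          have h6 := E2 2 1 (by norm_num)
          rw [(hcst 2).1, (hcst 2).2, hα, hβ, ψ1, sub_zero, mul_one] at h6
          have h8 : (1 : ℝ) = (1 / (1 - 2) : ℝ) := ψinj (by rw [← h6, ψ1])
          norm_num at h8
        · have h6 := E1 (1 - y) y hy1
          rw [(hcst (1 - y)).1, (hcst (1 - y)).2, hα, hβ,
            show (1 - y) / (1 - y) = 1 from div_self (sub_ne_zero.mpr (Ne.symm hy1)),
            φ1, one_mul] at h6
          have h7 : ψ y = 1 := by linarith
          exact hy1 (ψinj (by rw [h7, ψ1]))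
      · exfalso
        have hpq : x • u + y • w + a ≠ x' • u + y' • w + a := ptne (Or.inl hxx)
        have hcol := collapse g hP hI hpq h
        have hcF : ∀ t : ℝ, F1 (x + t * (x' - x)) (y + t * (y' - y)) = F1 x y
            ∧ F2 (x + t * (x' - x)) (y + t * (y' - y)) = F2 x y := by
          intro t
          have h3 := hcol t
          have hpt : t • ((x' • u + y' • w + a) - (x • u + y • w + a)) + (x • u + y • w + a)
              = (x + t * (x' - x)) • u + (y + t * (y' - y)) • w + a := by module
          rw [hpt, hF, hF] at h3
          exact ⟨(coeff h3).1, (coeff h3).2⟩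
        have hdx : x' - x ≠ 0 := sub_ne_zero.mpr (Ne.symm hxx)
        have hdy : y' - y ≠ 0 := sub_ne_zero.mpr (Ne.symm hyy)
        have h5 := hcF (-y / (y' - y))
        rw [show y + -y / (y' - y) * (y' - y) = 0 from by field_simp; ring] at h5
        have hβ : F2 x y = 0 := by rw [← h5.2, (hFx0 _).2]
        have h6 := hcF (-x / (x' - x))
        rw [show x + -x / (x' - x) * (x' - x) = 0 from by field_simp; ring] at h6
        have hα : F1 x y = 0 := by rw [← h6.1, (hF0y _).1]
        have hz := Z x y hα hβ
        have h7 := hcF 1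
        rw [show x + 1 * (x' - x) = x' from by ring, show y + 1 * (y' - y) = y' from by ring]
          at h7
        have hz' := Z x' y' (by rw [h7.1, hα]) (by rw [h7.2, hβ])
        exact hxx (hz.1.trans hz'.1.symm)
  have R2 : ∀ x y : ℝ, F2 x y = ψ y := by
    intro x y
    by_contra hβ
    rcases eq_or_ne y 0 with hy | hy
    · subst hy; rw [(hFx0 x).2, ψ0] at hβ; exact hβ rfl
    rcases eq_or_ne x 0 with hx | hx
    · subst hx; rw [(hF0y y).2] at hβ; exact hβ rfl
    have hpq : y • w + a ≠ x • u + y • w + a := by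
      intro h
      have h1 : (x • u + y • w + a) - (y • w + a) = x • u := by module
      rw [← h, sub_self] at h1
      exact hx (smul_eq_zero'' hu0 h1.symm)
    have hgq : g (y • w + a) ≠ g (x • u + y • w + a) := by
      rw [hψ y, hF x y]
      intro h
      have h2 : (0:ℝ) • U + ψ y • W + A = F1 x y • U + F2 x y • W + A := by
        rw [show (0:ℝ) • U + ψ y • W + A = ψ y • W + A from by module, h]
      exact hβ (coeff h2).2.symm
    have hβ' : ψ y - F2 x y ≠ 0 := sub_ne_zero.mpr (Ne.symm hβ)
    obtain ⟨t, ht⟩ := surj_line g hP hpq hgq (ψ y / (ψ y - F2 x y))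
    have hpt : t • ((x • u + y • w + a) - (y • w + a)) + (y • w + a)
        = (t * x) • u + y • w + a := by module
    rw [hpt, hF, hF x y, hψ y] at ht
    have hw0' : ψ y / (ψ y - F2 x y) * (F2 x y - ψ y) + ψ y = 0 := by
      field_simp
      ring
    have h2 : F1 (t * x) y • U + F2 (t * x) y • W + A
        = (ψ y / (ψ y - F2 x y) * F1 x y) • U
          + (ψ y / (ψ y - F2 x y) * (F2 x y - ψ y) + ψ y) • W + A := by
      rw [ht]; module
    obtain ⟨t', ht'⟩ := surj_line g hP hba hgba (ψ y / (ψ y - F2 x y) * F1 x y)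
    have hpt' : t' • ((u + a) - a) + a = t' • u + a := by module
    rw [hpt', hga, hgb] at ht'
    have h3 : g (t' • u + (0:ℝ) • w + a)
        = (ψ y / (ψ y - F2 x y) * F1 x y) • U + (0:ℝ) • W + A := by
      rw [show t' • u + (0:ℝ) • w + a = t' • u + a from by module, ht']; module
    have h4 : g ((t * x) • u + y • w + a) = g (t' • u + (0:ℝ) • w + a) := by
      rw [hF, h2, hw0', h3]
    exact hy (injP _ _ _ _ h4).2
  have R1 : ∀ x y : ℝ, F1 x y = φ x := by
    intro x y
    by_contra hα
    rcases eq_or_ne x 0 with hx | hx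
    · subst hx; rw [(hF0y y).1, φ0] at hα; exact hα rfl
    rcases eq_or_ne y 0 with hy | hy
    · subst hy; rw [(hFx0 x).1] at hα; exact hα rfl
    have hpq : x • u + a ≠ x • u + y • w + a := by
      intro h
      have h1 : (x • u + y • w + a) - (x • u + a) = y • w := by module
      rw [← h, sub_self] at h1
      exact hy (smul_eq_zero'' hw0 h1.symm)
    have hgq : g (x • u + a) ≠ g (x • u + y • w + a) := by
      rw [hφ x, hF x y]
      intro h
      have h2 : φ x • U + (0:ℝ) • W + A = F1 x y • U + F2 x y • W + A := by
        rw [show φ x • U + (0:ℝ) • W + A = φ x • U + A from by module, h]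
      exact hα (coeff h2).1.symm
    have hα' : φ x - F1 x y ≠ 0 := sub_ne_zero.mpr (Ne.symm (fun hh => hα hh))
    obtain ⟨t, ht⟩ := surj_line g hP hpq hgq (φ x / (φ x - F1 x y))
    have hpt : t • ((x • u + y • w + a) - (x • u + a)) + (x • u + a)
        = x • u + (t * y) • w + a := by module
    rw [hpt, hF, hF x y, hφ x] at ht
    have hw0' : φ x / (φ x - F1 x y) * (F1 x y - φ x) + φ x = 0 := by
      field_simp
      ring
    have h2 : F1 x (t * y) • U + F2 x (t * y) • W + A
        = (φ x / (φ x - F1 x y) * (F1 x y - φ x) + φ x) • U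
          + (φ x / (φ x - F1 x y) * F2 x y) • W + A := by
      rw [ht]; module
    obtain ⟨t', ht'⟩ := surj_line g hP hca hgca (φ x / (φ x - F1 x y) * F2 x y)
    have hpt' : t' • ((w + a) - a) + a = t' • w + a := by module
    rw [hpt', hga, hgc] at ht'
    have h3 : g ((0:ℝ) • u + t' • w + a)
        = (0:ℝ) • U + (φ x / (φ x - F1 x y) * F2 x y) • W + A := by
      rw [show (0:ℝ) • u + t' • w + a = t' • w + a from by module, ht']; module
    have h4 : g (x • u + (t * y) • w + a) = g ((0:ℝ) • u + t' • w + a) := by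
      rw [hF, h2, hw0', h3]
    exact hx (injP _ _ _ _ h4).1
  have φψ : ∀ t : ℝ, φ t = ψ t := by
    intro t
    have hpq : a ≠ (1:ℝ) • u + (1:ℝ) • w + a := by
      intro h
      have h1 : ((1:ℝ) • u + (1:ℝ) • w + a) - a = (1:ℝ) • u + (1:ℝ) • w := by module
      rw [← h, sub_self] at h1
      exact one_ne_zero (huw _ _ h1.symm).1
    have hgq : g a ≠ g ((1:ℝ) • u + (1:ℝ) • w + a) := by
      rw [hga, hF 1 1]
      intro h
      have h2 : (0:ℝ) • U + (0:ℝ) • W + A = F1 1 1 • U + F2 1 1 • W + A := by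
        rw [← h]; module
      have h3 := (coeff h2).1
      rw [R1 1 1, φ1] at h3
      exact zero_ne_one h3
    obtain ⟨s, hs⟩ := mem_line g hP hpq hgq t
    have hpt : t • (((1:ℝ) • u + (1:ℝ) • w + a) - a) + a = t • u + t • w + a := by module
    rw [hpt, hga, hF 1 1, hF t t] at hs
    have h2 : F1 t t • U + F2 t t • W + A = (s * F1 1 1) • U + (s * F2 1 1) • W + A := by
      rw [hs]; module
    have h3 := coeff h2
    rw [R1, R1, R2, R2, φ1, ψ1, mul_one] at h3
    exact h3.1.trans h3.2.symm
  have mult : ∀ s q : ℝ, φ (s * q) = φ s * φ q := by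
    intro s q
    rcases eq_or_ne q 0 with hq | hq
    · rw [hq, mul_zero, φ0, mul_zero]
    · have hy1 : (1 - q : ℝ) ≠ 1 := by intro h; apply hq; linarith
      have hbase : ∀ z : ℝ, φ z = φ (z / q) * φ q := by
        intro z
        have h6 := E1 z (1 - q) hy1
        rw [R1, R2, show (1:ℝ) - (1 - q) = q from by ring] at h6
        have h7 := E1 q (1 - q) hy1
        rw [R1, R2, show (1:ℝ) - (1 - q) = q from by ring, div_self hq, φ1, one_mul] at h7
        rw [← h7] at h6
        exact h6
      have h8 := hbase (s * q)
      rwa [mul_div_assoc, div_self hq, mul_one] at h8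
  have hstar : ∀ s s' t : ℝ, φ (s + t * (s' - s)) = φ s + φ t * (φ s' - φ s) := by
    intro s s' t
    have hpq : s • u + a ≠ s' • u + (1:ℝ) • w + a := by
      intro h
      have h1 : (s' • u + (1:ℝ) • w + a) - (s • u + a) = (s' - s) • u + (1:ℝ) • w := by module
      rw [← h, sub_self] at h1
      exact one_ne_zero (huw _ _ h1.symm).2
    have hgq : g (s • u + a) ≠ g (s' • u + (1:ℝ) • w + a) := by
      rw [hφ s, hF s' 1]
      intro h
      have h2 : φ s • U + (0:ℝ) • W + A = F1 s' 1 • U + F2 s' 1 • W + A := by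
        rw [show φ s • U + (0:ℝ) • W + A = φ s • U + A from by module, h]
      have h3 := (coeff h2).2
      rw [R2, ψ1] at h3
      exact zero_ne_one h3
    obtain ⟨σ, hσ⟩ := mem_line g hP hpq hgq t
    have hpt : t • ((s' • u + (1:ℝ) • w + a) - (s • u + a)) + (s • u + a)
        = (s + t * (s' - s)) • u + t • w + a := by module
    rw [hpt, hφ s, hF s' 1, hF (s + t * (s' - s)) t] at hσ
    have h2 : F1 (s + t * (s' - s)) t • U + F2 (s + t * (s' - s)) t • W + A
        = (φ s + σ * (F1 s' 1 - φ s)) • U + (σ * F2 s' 1) • W + A := by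
      rw [hσ]; module
    have h3 := coeff h2
    have hσt : σ = φ t := by
      have h5 := h3.2
      rw [R2, R2, ψ1, mul_one] at h5
      exact ((φψ t).trans h5).symm
    have h4 := h3.1
    rw [R1, R1, hσt] at h4
    exact h4
  have φ1mt : ∀ t : ℝ, φ (1 - t) = 1 - φ t := by
    intro t
    have h := hstar 1 0 t
    rw [show (1:ℝ) + t * (0 - 1) = 1 - t from by ring, φ1, φ0] at h
    rw [h]; ring
  have φm1 : φ (-1) = -1 := by
    have hsq : φ (-1) * φ (-1) = 1 := by
      rw [← mult, show ((-1:ℝ) * -1) = 1 from by norm_num, φ1]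
    rcases mul_self_eq_one_iff.mp hsq with h | h
    · exfalso
      have h2 : (-1:ℝ) = 1 := φinj (by rw [h, φ1])
      norm_num at h2
    · exact h
  have φ2 : φ 2 = 2 := by
    rw [show (2:ℝ) = 1 - (-1) from by norm_num, φ1mt, φm1]
  have φhalf : φ (1/2) = 1/2 := by
    have h := mult (1/2) 2
    rw [show (1/2 : ℝ) * 2 = 1 from by norm_num, φ1, φ2] at h
    linarith
  have φadd : ∀ p q : ℝ, φ (p + q) = φ p + φ q := by
    intro p q
    have hmid := hstar p q (1/2)
    rw [φhalf, show p + 1/2 * (q - p) = (p + q)/2 from by ring] at hmid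
    have h2 := mult ((p + q)/2) 2
    rw [show (p + q)/2 * 2 = p + q from by ring, hmid, φ2] at h2
    rw [h2]; ring
  have φid : ∀ z : ℝ, φ z = z := by
    have h := Subsingleton.elim
      (⟨⟨⟨φ, φ1⟩, mult⟩, φ0, φadd⟩ : ℝ →+* ℝ) (RingHom.id ℝ)
    intro z
    exact RingHom.congr_fun h z
  intro x y
  rw [hF x y, R1, R2, φid x, ← φψ y, φid y]





end Plane

/-- `g` is an affine mapping: a linear map plus a constant. -/
def IsAffineMapping {X Y : Type*} [AddCommGroup X] [Module ℝ X]
    [AddCommGroup Y] [Module ℝ Y] (g : X → Y) : Prop :=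
  ∃ (f : X → Y) (b : Y),
    (∀ (c : ℝ) (a : X), f (c • a) = c • f a) ∧
    (∀ a a' : X, f (a + a') = f a + f a') ∧
    (∀ a : X, g a = f a + b)

theorem affine_iff_line_preserving
    {X Y : Type*} [AddCommGroup X] [Module ℝ X] [AddCommGroup Y] [Module ℝ Y]
    (g : X → Y)
    (hind : ∃ astar a₀ a₁ : X, ∀ r s : ℝ,
      r • (g a₀ - g astar) + s • (g a₁ - g astar) = 0 → r = 0 ∧ s = 0) :
    IsAffineMapping g ↔
      ((∀ L : Set X, IsLine L → IsPoint (g '' L) ∨ IsLine (g '' L)) ∧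
        (∀ L : Set X, IsLine L → IsLine (g '' L) → Set.InjOn g L)) := by
  constructor
  · rintro ⟨f, b, hsmul, hadd, hgf⟩
    constructor
    · rintro L ⟨o, d, hd, rfl⟩
      have himg : g '' {x | ∃ r : ℝ, x = r • d + o}
          = {z | ∃ r : ℝ, z = r • f d + (f o + b)} := by
        ext z
        constructor
        · rintro ⟨x, ⟨r, rfl⟩, rfl⟩
          exact ⟨r, by rw [hgf, hadd, hsmul]; abel⟩
        · rintro ⟨r, rfl⟩
          exact ⟨r • d + o, ⟨r, rfl⟩, by rw [hgf, hadd, hsmul]; abel⟩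
      rcases eq_or_ne (f d) 0 with hfd | hfd
      · left
        refine ⟨f o + b, ?_⟩
        rw [himg]
        ext z
        simp [hfd]
      · right
        exact ⟨f o + b, f d, hfd, himg⟩
    · rintro L ⟨o, d, hd, rfl⟩ hM x₁ hx₁ x₂ hx₂ hgx
      obtain ⟨r₁, rfl⟩ := hx₁
      obtain ⟨r₂, rfl⟩ := hx₂
      have hval : ∀ r : ℝ, g (r • d + o) = r • f d + (f o + b) := fun r => by
        rw [hgf, hadd, hsmul]; abel
      have hfd : f d ≠ 0 := by
        intro h0
        obtain ⟨o', d', hd', him⟩ := hM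
        have ho1 : o' ∈ g '' {x | ∃ r : ℝ, x = r • d + o} := by
          rw [him]; exact ⟨0, by module⟩
        have ho2 : d' + o' ∈ g '' {x | ∃ r : ℝ, x = r • d + o} := by
          rw [him]; exact ⟨1, by module⟩
        obtain ⟨x1, ⟨s1, rfl⟩, hv1⟩ := ho1
        obtain ⟨x2, ⟨s2, rfl⟩, hv2⟩ := ho2
        rw [hval, h0, smul_zero, zero_add] at hv1 hv2
        exact hd' (add_eq_right.mp (hv2.symm.trans hv1))
      have h1 : r₁ • f d + (f o + b) = r₂ • f d + (f o + b) := by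
        rw [← hval r₁, ← hval r₂, hgx]
      have h2 := smul_cancel' hfd (add_right_cancel h1)
      rw [h2]
  · rintro ⟨hP, hI⟩
    obtain ⟨astar, a₀, a₁, hd⟩ := hind
    have key : ∀ p q : X, ∀ t : ℝ, g (t • (q - p) + p) = t • (g q - g p) + g p := by
      intro p q t
      rcases eq_or_ne p q with rfl | hpq
      · simp
      rcases eq_or_ne (g p) (g q) with hg | hg
      · rw [collapse g hP hI hpq hg t, ← hg]
        simp
      · have hc : ∃ c, ∀ r : ℝ, g c ≠ r • (g q - g p) + g p := by
          by_contra hcon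
          push_neg at hcon
          obtain ⟨r0, h0⟩ := hcon astar
          obtain ⟨r1, h1⟩ := hcon a₀
          obtain ⟨r2, h2⟩ := hcon a₁
          have e1 : g a₀ - g astar = (r1 - r0) • (g q - g p) := by rw [h1, h0]; module
          have e2 : g a₁ - g astar = (r2 - r0) • (g q - g p) := by rw [h2, h0]; module
          have h3 := hd (r2 - r0) (-(r1 - r0)) (by rw [e1, e2]; module)
          have hr1 : r1 - r0 = 0 := by linarith [h3.2]
          have hr2 : r2 - r0 = 0 := h3.1
          have h4 := hd 1 0 (by rw [e1, e2, hr1, hr2]; module)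
          exact one_ne_zero h4.1
        obtain ⟨c, hc⟩ := hc
        have hUW : ∀ r s : ℝ, r • (g q - g p) + s • (g c - g p) = 0 → r = 0 ∧ s = 0 := by
          intro r s h
          rcases eq_or_ne s 0 with hs | hs
          · subst hs
            rw [zero_smul, add_zero] at h
            exact ⟨smul_eq_zero'' (sub_ne_zero.mpr (Ne.symm hg)) h, rfl⟩
          · exfalso
            apply hc (-(s⁻¹ * r))
            have h3 : g c - g p = (-(s⁻¹ * r)) • (g q - g p) := by
              have h2 : s • (g c - g p) = (-r) • (g q - g p) := by
                rw [neg_smul, eq_neg_iff_add_eq_zero, add_comm]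
                exact h
              have h4 := congrArg (fun z => s⁻¹ • z) h2
              simp only [smul_smul, inv_mul_cancel₀ hs, one_smul] at h4
              rw [h4]; module
            rw [← h3]
            module
        have happ := plane_thm g hP hI (a := p) (u := q - p) (w := c - p)
          (A := g p) (U := g q - g p) (W := g c - g p) rfl ?_ ?_ hUW
        · have h5 := happ t 0
          rw [show t • (q - p) + (0:ℝ) • (c - p) + p = t • (q - p) + p from by module] at h5
          rw [h5]
          module
        · rw [show q - p + p = q from by module]
          module
        · rw [show c - p + p = c from by module]
          module
    refine ⟨fun x => g x - g 0, g 0, ?_, ?_, ?_⟩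
    · intro r x
      show g (r • x) - g 0 = r • (g x - g 0)
      have h := key 0 x r
      rw [show r • (x - 0) + 0 = r • x from by module] at h
      rw [h]
      module
    · intro x y
      show g (x + y) - g 0 = (g x - g 0) + (g y - g 0)
      have hm := key x y (1/2 : ℝ)
      have h2 := key 0 ((1/2 : ℝ) • (y - x) + x) 2
      rw [show (2:ℝ) • ((1/2:ℝ) • (y - x) + x - 0) + 0 = x + y from by module] at h2
      rw [h2, hm]
      module
    · intro x
      show g x = g x - g 0 + g 0
      module
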